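/- Let θ be a real-valued arithmetic function with θ(1) ≥ 2 and θ(n) ≥ n, and let χ be the characteristic function of B_θ. Then for Re(s) > 1, 0 = ∑_{n≥1} χ(n) n^{-s} ( ∑_{p ≤ θ(n)} (log p)/(p^s − 1) − log n ) ∏_{p ≤ θ(n)} (1 − p^{-s}). -/

import Mathlib

open scoped Classical

/-- Membership in the set `B_θ`. -/
def InB (θ : ℕ → ℝ) (n : ℕ) : Prop :=
  0 < n ∧ ∀ p ∈ n.primeFactors,
    (p : ℝ) ≤ θ (∏ q ∈ n.primeFactors.filter (· < p), q ^ n.factorization q)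

/-- The finite set of primes `p ≤ x`. -/
noncomputable def primesLe (x : ℝ) : Finset ℕ :=
  (Finset.range (⌊x⌋₊ + 1)).filter fun p => p.Prime ∧ (p : ℝ) ≤ x

namespace DIB

open Finset

lemma mem_primesLe {x : ℝ} {p : ℕ} : p ∈ primesLe x ↔ p.Prime ∧ (p : ℝ) ≤ x := by
  constructor
  · intro h
    exact (Finset.mem_filter.mp h).2
  · rintro ⟨hp, hx⟩
    refine Finset.mem_filter.mpr ⟨Finset.mem_range.mpr ?_, hp, hx⟩
    exact Nat.lt_succ_of_le (Nat.le_floor hx)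

/-- the `S`-part of `N` -/
def sfac (N : ℕ) (S : Finset ℕ) : ℕ := ∏ q ∈ S, q ^ N.factorization q

lemma sfac_ne_zero (N : ℕ) (S : Finset ℕ) : sfac N S ≠ 0 := by
  refine Finset.prod_ne_zero_iff.mpr fun q hq => ?_
  rcases Nat.eq_zero_or_pos q with rfl | hq0
  · rw [Nat.factorization_eq_zero_of_not_prime _ Nat.not_prime_zero]
    simp
  · exact pow_ne_zero _ hq0.ne'

lemma factorization_sfac (N : ℕ) (S : Finset ℕ) (p : ℕ) :
    (sfac N S).factorization p = if p ∈ S then N.factorization p else 0 := by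
  rw [sfac, Nat.factorization_prod (fun q hq => by
    rcases Nat.eq_zero_or_pos q with rfl | hq0
    · rw [Nat.factorization_eq_zero_of_not_prime _ Nat.not_prime_zero]; simp
    · exact pow_ne_zero _ hq0.ne')]
  rw [Finsupp.finset_sum_apply]
  by_cases hpS : p ∈ S
  · rw [if_pos hpS]
    rw [Finset.sum_eq_single p]
    · by_cases hp : p.Prime
      · rw [Nat.factorization_pow, Finsupp.smul_apply, hp.factorization,
          Finsupp.single_eq_same, smul_eq_mul, mul_one]
      · simp [Nat.factorization_eq_zero_of_not_prime _ hp]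
    · intro q hq hqp
      by_cases hq' : q.Prime
      · rw [Nat.factorization_pow, Finsupp.smul_apply, hq'.factorization,
          Finsupp.single_eq_of_ne' hqp, smul_eq_mul, mul_zero]
      · simp [Nat.factorization_eq_zero_of_not_prime _ hq']
    · intro h; exact absurd hpS h
  · rw [if_neg hpS]
    refine Finset.sum_eq_zero fun q hq => ?_
    by_cases hq' : q.Prime
    · rw [Nat.factorization_pow, Finsupp.smul_apply, hq'.factorization,
        Finsupp.single_eq_of_ne' (fun h : q = p => hpS (h ▸ hq)), smul_eq_mul, mul_zero]
    · simp [Nat.factorization_eq_zero_of_not_prime _ hq']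

/-- the prefix of `N` below `P` -/
def pref (N P : ℕ) : ℕ := sfac N (Finset.range P)

lemma pref_ne_zero (N P : ℕ) : pref N P ≠ 0 := sfac_ne_zero _ _

lemma factorization_pref (N P p : ℕ) :
    (pref N P).factorization p = if p < P then N.factorization p else 0 := by
  rw [pref, factorization_sfac]
  simp [Finset.mem_range]

lemma pref_eq_self {N P : ℕ} (hN : N ≠ 0) (h : N < P) : pref N P = N := by
  refine Nat.eq_of_factorization_eq (pref_ne_zero _ _) hN fun p => ?_
  rw [factorization_pref]
  split_ifs with hp
  · rfl
  · symm
    rw [Nat.factorization_eq_zero_iff]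
    by_cases hpp : p.Prime
    · refine Or.inr (Or.inl fun hdvd => ?_)
      exact hp (lt_of_le_of_lt (Nat.le_of_dvd (Nat.pos_of_ne_zero hN) hdvd) h)
    · exact Or.inl hpp

/-- The prefix product appearing in `InB` equals `pref`. -/
lemma prefix_eq_pref {n : ℕ} (p : ℕ) :
    (∏ q ∈ n.primeFactors.filter (· < p), q ^ n.factorization q) = pref n p := by
  rw [pref, sfac]
  refine Finset.prod_subset (fun q hq => Finset.mem_range.mpr (Finset.mem_filter.mp hq).2) ?_
  intro q hq hq'
  have : q ∉ n.primeFactors := fun h => hq' (Finset.mem_filter.mpr ⟨h, Finset.mem_range.mp hq⟩)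
  rw [← Nat.support_factorization, Finsupp.notMem_support_iff] at this
  rw [this, pow_zero]


section Greedy

variable {θ : ℕ → ℝ}

/-- `P` is a "stopping prime" for `N`. -/
def Good (θ : ℕ → ℝ) (N P : ℕ) : Prop := P.Prime ∧ θ (pref N P) < P

lemma exists_good (hθ : ∀ n : ℕ, 1 ≤ n → (n : ℝ) ≤ θ n) {N : ℕ} (hN : N ≠ 0) :
    ∃ P, Good θ N P := by
  obtain ⟨P, hPle, hP⟩ := Nat.exists_infinite_primes (max (N + 1) (⌊θ N⌋₊ + 1))
  refine ⟨P, hP, ?_⟩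
  rw [pref_eq_self hN (lt_of_lt_of_le (Nat.lt_succ_self N) (le_trans (le_max_left _ _) hPle))]
  calc θ N < ⌊θ N⌋₊ + 1 := Nat.lt_floor_add_one _
  _ ≤ P := by exact_mod_cast Nat.cast_le.mpr (le_trans (le_max_right _ _) hPle)

/-- The greedy stopping prime. -/
noncomputable def stopP (hθ : ∀ n : ℕ, 1 ≤ n → (n : ℝ) ≤ θ n) {N : ℕ} (hN : N ≠ 0) : ℕ :=
  Nat.find (exists_good hθ hN)

/-- The greedy element of `B_θ` attached to `N`. -/
noncomputable def phi (hθ : ∀ n : ℕ, 1 ≤ n → (n : ℝ) ≤ θ n) {N : ℕ} (hN : N ≠ 0) : ℕ :=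
  pref N (stopP hθ hN)

lemma good_stopP (hθ : ∀ n : ℕ, 1 ≤ n → (n : ℝ) ≤ θ n) {N : ℕ} (hN : N ≠ 0) :
    Good θ N (stopP hθ hN) := Nat.find_spec (exists_good hθ hN)

lemma stopP_min (hθ : ∀ n : ℕ, 1 ≤ n → (n : ℝ) ≤ θ n) {N : ℕ} (hN : N ≠ 0) {Q : ℕ}
    (hQ : Q < stopP hθ hN) (hQp : Q.Prime) : (Q : ℝ) ≤ θ (pref N Q) := by
  have := Nat.find_min (exists_good hθ hN) hQ
  rw [Good] at this
  push_neg at this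
  exact this hQp

lemma phi_ne_zero (hθ : ∀ n : ℕ, 1 ≤ n → (n : ℝ) ≤ θ n) {N : ℕ} (hN : N ≠ 0) :
    phi hθ hN ≠ 0 := pref_ne_zero _ _

lemma factorization_phi (hθ : ∀ n : ℕ, 1 ≤ n → (n : ℝ) ≤ θ n) {N : ℕ} (hN : N ≠ 0) (p : ℕ) :
    (phi hθ hN).factorization p =
      if p < stopP hθ hN then N.factorization p else 0 := factorization_pref _ _ _

lemma theta_phi_lt (hθ : ∀ n : ℕ, 1 ≤ n → (n : ℝ) ≤ θ n) {N : ℕ} (hN : N ≠ 0) :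
    θ (phi hθ hN) < stopP hθ hN := (good_stopP hθ hN).2

lemma phi_mem_B (hθ : ∀ n : ℕ, 1 ≤ n → (n : ℝ) ≤ θ n) {N : ℕ} (hN : N ≠ 0) :
    InB θ (phi hθ hN) := by
  set n := phi hθ hN with hn
  refine ⟨Nat.pos_of_ne_zero (phi_ne_zero hθ hN), fun p hp => ?_⟩
  have hpp : p.Prime := Nat.prime_of_mem_primeFactors hp
  have hplt : p < stopP hθ hN := by
    by_contra h
    have := (Nat.mem_primeFactors.mp hp).2.1
    rw [Nat.Prime.dvd_iff_one_le_factorization hpp (phi_ne_zero hθ hN),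
      factorization_phi hθ hN p, if_neg h] at this
    omega
  have key : (∏ q ∈ n.primeFactors.filter (· < p), q ^ n.factorization q) = pref N p := by
    rw [prefix_eq_pref p]
    refine Nat.eq_of_factorization_eq (pref_ne_zero _ _) (pref_ne_zero _ _) fun q => ?_
    rw [factorization_pref, factorization_pref]
    split_ifs with hq
    · rw [factorization_phi hθ hN, if_pos (lt_trans hq hplt)]
    · rfl
  rw [key]
  exact stopP_min hθ hN hplt hpp

lemma phi_matches (hθ : ∀ n : ℕ, 1 ≤ n → (n : ℝ) ≤ θ n) {N : ℕ} (hN : N ≠ 0) :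
    ∀ p ∈ primesLe (θ (phi hθ hN)), N.factorization p = (phi hθ hN).factorization p := by
  intro p hp
  obtain ⟨hpp, hple⟩ := mem_primesLe.mp hp
  have hlt : (p : ℝ) < stopP hθ hN := lt_of_le_of_lt hple (theta_phi_lt hθ hN)
  have hplt : p < stopP hθ hN := by exact_mod_cast hlt
  rw [factorization_phi hθ hN, if_pos hplt]

/-- core step of the uniqueness argument -/
lemma unique_core (hθ : ∀ n : ℕ, 1 ≤ n → (n : ℝ) ≤ θ n) {N m m' p : ℕ}
    (hmB : InB θ m) (hm'B : InB θ m')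
    (hmN : ∀ q ∈ primesLe (θ m), N.factorization q = m.factorization q)
    (hagree : ∀ q < p, m.factorization q = m'.factorization q)
    (hpp : p.Prime)
    (hmp : m.factorization p ≠ N.factorization p) :
    m'.factorization p = m.factorization p := by
  have hθm : θ m < p := by
    by_contra h
    push_neg at h
    exact hmp (hmN p (mem_primesLe.mpr ⟨hpp, h⟩)).symm
  have hmlt : (m : ℝ) < p := lt_of_le_of_lt (hθ m hmB.1) hθm
  have hmltp : m < p := by exact_mod_cast hmlt
  have hmp0 : m.factorization p = 0 := by
    rw [Nat.factorization_eq_zero_iff]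
    refine Or.inr (Or.inl fun hdvd => ?_)
    exact absurd (Nat.le_of_dvd hmB.1 hdvd) (not_le.mpr hmltp)
  rw [hmp0]
  by_contra hne
  have hpdvd : p ∈ m'.primeFactors := by
    refine Nat.mem_primeFactors.mpr ⟨hpp, ?_, hm'B.1.ne'⟩
    rw [Nat.Prime.dvd_iff_one_le_factorization hpp hm'B.1.ne']
    omega
  have := hm'B.2 p hpdvd
  have hprefix : (∏ q ∈ m'.primeFactors.filter (· < p), q ^ m'.factorization q) = m := by
    rw [prefix_eq_pref p]
    have h1 : pref m' p = pref m p := by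
      refine Nat.eq_of_factorization_eq (pref_ne_zero _ _) (pref_ne_zero _ _) fun q => ?_
      rw [factorization_pref, factorization_pref]
      split_ifs with hq
      · exact (hagree q hq).symm
      · rfl
    rw [h1, pref_eq_self hmB.1.ne' hmltp]
  rw [hprefix] at this
  exact absurd this (not_le.mpr hθm)

/-- Uniqueness: any two elements of `B_θ` matching `N` below their own `θ`-bound agree. -/
lemma unique_aux (hθ : ∀ n : ℕ, 1 ≤ n → (n : ℝ) ≤ θ n) {N n n' : ℕ}
    (hn : InB θ n) (hn' : InB θ n')
    (hm : ∀ p ∈ primesLe (θ n), N.factorization p = n.factorization p)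
    (hm' : ∀ p ∈ primesLe (θ n'), N.factorization p = n'.factorization p) :
    n = n' := by
  by_contra hne
  have hex : ∃ p, n.factorization p ≠ n'.factorization p := by
    by_contra h
    push_neg at h
    exact hne (Nat.eq_of_factorization_eq hn.1.ne' hn'.1.ne' h)
  have hp : n.factorization (Nat.find hex) ≠ n'.factorization (Nat.find hex) :=
    Nat.find_spec hex
  set p := Nat.find hex with hpdef
  have hmin : ∀ q < p, n.factorization q = n'.factorization q := fun q hq => by
    have := Nat.find_min hex hq
    push_neg at this
    exact this
  have hpp : p.Prime := by
    by_contra h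
    rw [Nat.factorization_eq_zero_of_not_prime _ h, Nat.factorization_eq_zero_of_not_prime _ h]
      at hp
    exact hp rfl
  by_cases hcase : n.factorization p = N.factorization p
  · have : n'.factorization p ≠ N.factorization p := fun h => hp (by rw [hcase, h])
    have := unique_core hθ hn' hn hm' (fun q hq => (hmin q hq).symm) hpp this
    exact hp this
  · exact hp (unique_core hθ hn hn' hm hmin hpp hcase).symm

/-- Characterization of the fiber of the greedy map. -/
lemma phi_eq_iff (hθ : ∀ n : ℕ, 1 ≤ n → (n : ℝ) ≤ θ n) {N n : ℕ} (hN : N ≠ 0) :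
    phi hθ hN = n ↔
      InB θ n ∧ ∀ p ∈ primesLe (θ n), N.factorization p = n.factorization p := by
  constructor
  · rintro rfl
    exact ⟨phi_mem_B hθ hN, phi_matches hθ hN⟩
  · rintro ⟨hnB, hmatch⟩
    exact unique_aux hθ (phi_mem_B hθ hN) hnB (phi_matches hθ hN) hmatch

end Greedy
section Sets

open Nat

/-- `S`-rough numbers: no prime factor in `S`. -/
def rough (S : Finset ℕ) : Set ℕ := {M | M ≠ 0 ∧ ∀ p ∈ S, M.factorization p = 0}

/-- The basic event attached to `n`. -/
def Eset (θ : ℕ → ℝ) (n : ℕ) : Set ℕ :=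
  {N | N ≠ 0 ∧ ∀ p ∈ primesLe (θ n), N.factorization p = n.factorization p}

lemma factorization_eq_zero_of_not_mem {S : Finset ℕ} {a : ℕ}
    (ha : a ∈ Nat.factoredNumbers S) {q : ℕ} (hq : q ∉ S) : a.factorization q = 0 := by
  by_contra h
  have : q ∈ a.factorization.support := Finsupp.mem_support_iff.mpr h
  rw [Nat.support_factorization] at this
  exact hq (Nat.primeFactors_subset_of_mem_factoredNumbers ha this)

/-- Multiplication gives a bijection between `S`-factored × `S`-rough and positive naturals. -/
lemma mulMap_bijective (S : Finset ℕ) :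
    Function.Bijective (fun x : Nat.factoredNumbers S × rough S =>
      (⟨x.1.val * x.2.val, mul_ne_zero (Nat.ne_zero_of_mem_factoredNumbers x.1.2) x.2.2.1⟩ :
        {N : ℕ // N ≠ 0})) := by
  constructor
  · rintro ⟨⟨a, ha⟩, ⟨b, hb⟩⟩ ⟨⟨a', ha'⟩, ⟨b', hb'⟩⟩ h
    simp only [Subtype.mk_eq_mk] at h
    have ha0 : a ≠ 0 := Nat.ne_zero_of_mem_factoredNumbers ha
    have ha0' : a' ≠ 0 := Nat.ne_zero_of_mem_factoredNumbers ha'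
    have haa : a = a' := by
      refine Nat.eq_of_factorization_eq ha0 ha0' fun q => ?_
      have hf := congrArg (fun m => m.factorization q) h
      simp only [Nat.factorization_mul ha0 hb.1, Nat.factorization_mul ha0' hb'.1,
        Finsupp.add_apply] at hf
      by_cases hqS : q ∈ S
      · rw [hb.2 q hqS, hb'.2 q hqS] at hf
        omega
      · rw [factorization_eq_zero_of_not_mem ha hqS, factorization_eq_zero_of_not_mem ha' hqS]
    subst haa
    have : b = b' := by
      have := Nat.eq_of_mul_eq_mul_left (Nat.pos_of_ne_zero ha0) h
      exact this
    simp [this]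
  · rintro ⟨N, hN⟩
    set a := sfac N S with hadef
    have ha0 : a ≠ 0 := sfac_ne_zero _ _
    have hdvd : a ∣ N := by
      rw [← Nat.factorization_le_iff_dvd ha0 hN]
      intro q
      rw [factorization_sfac]
      split_ifs <;> simp
    set b := N / a with hbdef
    have hab : a * b = N := Nat.mul_div_cancel' hdvd
    have hb0 : b ≠ 0 := by
      intro h
      rw [h, mul_zero] at hab
      exact hN hab.symm
    have hbfac : ∀ q, b.factorization q = N.factorization q - a.factorization q := by
      intro q
      rw [hbdef, Nat.factorization_div hdvd]
      simp
    refine ⟨⟨⟨a, ?_⟩, ⟨b, ?_⟩⟩, ?_⟩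
    · refine Nat.mem_factoredNumbers_of_primeFactors_subset ha0 ?_
      intro q hq
      rw [← Nat.support_factorization, Finsupp.mem_support_iff] at hq
      by_contra hqS
      rw [factorization_sfac, if_neg hqS] at hq
      exact hq rfl
    · refine ⟨hb0, fun p hpS => ?_⟩
      rw [hbfac, factorization_sfac, if_pos hpS]
      omega
    · simp [hab]

/-- Multiplication by `n` gives a bijection from rough numbers to the event `Eset n`. -/
lemma mulN_bijective {θ : ℕ → ℝ} (hθ : ∀ n : ℕ, 1 ≤ n → (n : ℝ) ≤ θ n) {n : ℕ}
    (hn : InB θ n) :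
    Function.Bijective (fun M : rough (primesLe (θ n)) =>
      (⟨n * M.val, ⟨mul_ne_zero hn.1.ne' M.2.1, fun p hp => by
        rw [Nat.factorization_mul hn.1.ne' M.2.1, Finsupp.add_apply, M.2.2 p hp, add_zero]⟩⟩ :
        Eset θ n)) := by
  have hnfac : ∀ q, q ∉ primesLe (θ n) → n.factorization q = 0 := by
    intro q hq
    by_contra h
    have hq' : q ∈ n.primeFactors := by
      rw [← Nat.support_factorization]
      exact Finsupp.mem_support_iff.mpr h
    obtain ⟨hqp, hqdvd, -⟩ := Nat.mem_primeFactors.mp hq'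
    refine hq (mem_primesLe.mpr ⟨hqp, ?_⟩)
    calc (q : ℝ) ≤ n := by exact_mod_cast Nat.le_of_dvd hn.1 hqdvd
    _ ≤ θ n := hθ n hn.1
  constructor
  · rintro ⟨M, hM⟩ ⟨M', hM'⟩ h
    simp only [Subtype.mk_eq_mk] at h
    exact Subtype.ext (Nat.eq_of_mul_eq_mul_left hn.1 (congrArg Subtype.val h))
  · rintro ⟨N, hN0, hNm⟩
    have hdvd : n ∣ N := by
      rw [← Nat.factorization_le_iff_dvd hn.1.ne' hN0]
      intro q
      by_cases hq : q ∈ primesLe (θ n)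
      · rw [hNm q hq]
      · rw [hnfac q hq]
        simp
    set M := N / n with hMdef
    have hM0 : M ≠ 0 := by
      intro h
      have := Nat.mul_div_cancel' hdvd
      rw [← hMdef] at this
      rw [h, mul_zero] at this
      exact hN0 this.symm
    refine ⟨⟨M, hM0, fun p hp => ?_⟩, ?_⟩
    · rw [hMdef, Nat.factorization_div hdvd]
      simp only [Finsupp.tsub_apply]
      rw [hNm p hp]
      omega
    · apply Subtype.ext
      simp only
      rw [hMdef, Nat.mul_div_cancel' hdvd]

end Sets
section Analytic

open Complex Filter Asymptotics

variable {s : ℂ}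

/-- the summand `N ^ (-s)` -/
noncomputable def cf (s : ℂ) : ℕ → ℂ := fun N => (N : ℂ) ^ (-s)

/-- the summand `log N * N ^ (-s)` -/
noncomputable def clf (s : ℂ) : ℕ → ℂ := fun N => (Real.log N : ℂ) * (N : ℂ) ^ (-s)

lemma cf_eq_hom (hs : 1 < s.re) :
    cf s = ⇑(riemannZetaSummandHom (ne_zero_of_one_lt_re hs)) := rfl

lemma cf_zero (hs : 1 < s.re) : cf s 0 = 0 := by
  rw [cf_eq_hom hs]
  exact map_zero _

lemma summable_norm_cf (hs : 1 < s.re) : Summable fun N => ‖cf s N‖ := by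
  rw [cf_eq_hom hs]
  exact summable_riemannZetaSummand hs

lemma norm_cf_of_pos {N : ℕ} (hN : 0 < N) : ‖cf s N‖ = (N : ℝ) ^ (-s.re) := by
  rw [cf, norm_natCast_cpow_of_pos hN, neg_re]

lemma norm_cf_prime_lt_one (hs : 1 < s.re) {p : ℕ} (hp : p.Prime) : ‖cf s p‖ < 1 := by
  rw [norm_cf_of_pos hp.pos]
  exact Real.rpow_lt_one_of_one_lt_of_neg (by exact_mod_cast hp.one_lt) (by linarith)

lemma summable_norm_clf (hs : 1 < s.re) : Summable fun N => ‖clf s N‖ := by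
  set τ := (1 + s.re) / 2 with hτ
  have hτ1 : 1 < τ := by rw [hτ]; linarith
  have hτs : τ < s.re := by rw [hτ]; linarith
  have hgsum : Summable fun n : ℕ => (n : ℝ) ^ (-τ) :=
    Real.summable_nat_rpow.mpr (by linarith)
  refine summable_of_isBigO_nat hgsum ?_
  have h1 : Real.log =o[atTop] fun x : ℝ => x ^ (s.re - τ) :=
    isLittleO_log_rpow_atTop (by linarith)
  have h2 : (fun N : ℕ => Real.log N) =O[atTop] fun N : ℕ => (N : ℝ) ^ (s.re - τ) :=
    (h1.isBigO).comp_tendsto tendsto_natCast_atTop_atTop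
  have h4 : (fun N : ℕ => Real.log N * (N : ℝ) ^ (-s.re)) =O[atTop]
      fun N : ℕ => (N : ℝ) ^ (s.re - τ) * (N : ℝ) ^ (-s.re) :=
    h2.mul (isBigO_refl _ _)
  have h5 : (fun N : ℕ => (N : ℝ) ^ (s.re - τ) * (N : ℝ) ^ (-s.re)) =ᶠ[atTop]
      fun N : ℕ => (N : ℝ) ^ (-τ) := by
    filter_upwards [eventually_ge_atTop 1] with N hN
    rw [← Real.rpow_add (by exact_mod_cast hN : (0:ℝ) < N)]
    congr 1
    ring
  have h6 : (fun N : ℕ => Real.log N * (N : ℝ) ^ (-s.re)) =O[atTop]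
      fun N : ℕ => (N : ℝ) ^ (-τ) := h4.congr' (EventuallyEq.refl _ _) h5
  refine h6.congr' ?_ (EventuallyEq.refl _ _)
  filter_upwards [eventually_ge_atTop 1] with N hN
  have hN0 : 0 < N := hN
  have hlog : (0:ℝ) ≤ Real.log N := Real.log_nonneg (by exact_mod_cast hN)
  rw [clf]
  rw [norm_mul, Complex.norm_real, Real.norm_eq_abs, _root_.abs_of_nonneg hlog]
  have : ‖(N:ℂ) ^ (-s)‖ = (N:ℝ) ^ (-s.re) := norm_cf_of_pos hN0
  rw [this]

end Analytic
section Weighted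

set_option maxHeartbeats 1000000

open Complex Finset Asymptotics Filter

variable {s : ℂ}

lemma cf_mul (hs : 1 < s.re) (m n : ℕ) : cf s (m * n) = cf s m * cf s n := by
  rw [cf_eq_hom hs]
  exact map_mul _ _ _

lemma cf_pow (hs : 1 < s.re) (p k : ℕ) : cf s (p ^ k) = cf s p ^ k := by
  rw [cf_eq_hom hs]
  exact map_pow _ _ _

lemma one_sub_cf_ne_zero (hs : 1 < s.re) {p : ℕ} (hp : p.Prime) : (1 : ℂ) - cf s p ≠ 0 := by
  intro h
  have h1 : cf s p = 1 := by linear_combination -h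
  have h2 := norm_cf_prime_lt_one hs hp
  rw [h1, norm_one] at h2
  exact lt_irrefl _ h2

lemma cpow_prime_ne_zero {p : ℕ} (hp : p.Prime) : ((p : ℂ)) ^ s ≠ 0 := by
  intro h
  rcases Complex.cpow_eq_zero_iff _ _ |>.mp h with ⟨h0, -⟩
  exact_mod_cast hp.pos.ne' (by exact_mod_cast h0)

lemma cpow_prime_ne_one (hs : 1 < s.re) {p : ℕ} (hp : p.Prime) : ((p : ℂ)) ^ s ≠ 1 := by
  intro h
  have hnorm : ‖((p : ℂ)) ^ s‖ = (p : ℝ) ^ s.re := norm_natCast_cpow_of_pos hp.pos s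
  rw [h] at hnorm
  have h1 : (1 : ℝ) < (p : ℝ) ^ s.re := by
    rw [← Real.rpow_zero (p : ℝ)]
    exact Real.rpow_lt_rpow_left_iff (by exact_mod_cast hp.one_lt) |>.mpr (by linarith)
  rw [norm_one] at hnorm
  linarith [hnorm ▸ h1]

lemma cf_prime_div_eq (hs : 1 < s.re) {p : ℕ} (hp : p.Prime) :
    cf s p / (1 - cf s p) ^ 2 = 1 / ((p : ℂ) ^ s - 1) * (1 - cf s p)⁻¹ := by
  have hcf : cf s p = ((p : ℂ) ^ s)⁻¹ := by
    rw [cf, Complex.cpow_neg]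
  set w := (p : ℂ) ^ s with hw
  have hw0 : w ≠ 0 := cpow_prime_ne_zero hp
  have hw1 : w - 1 ≠ 0 := sub_ne_zero.mpr (cpow_prime_ne_one hs hp)
  have h1 : (1 : ℂ) - cf s p ≠ 0 := one_sub_cf_ne_zero hs hp
  rw [hcf] at h1 ⊢
  field_simp

/-- Main weighted Euler-type lemma, by induction on the finite set of primes. -/
lemma weighted_factored (hs : 1 < s.re) (S : Finset ℕ) :
    (∀ p ∈ S, p.Prime) →
    Summable (fun m : Nat.factoredNumbers S => ‖clf s m‖) ∧
      HasSum (fun m : Nat.factoredNumbers S => clf s (m : ℕ))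
        ((∑ p ∈ S, (Real.log p : ℂ) / ((p : ℂ) ^ s - 1)) * ∏ p ∈ S, (1 - cf s p)⁻¹) := by
  induction' S using Finset.induction_on with p S hpS ih
  · intro _
    rw [Nat.factoredNumbers_empty]
    constructor
    · exact Set.Finite.summable (Set.finite_singleton 1) fun n : ℕ => ‖clf s n‖
    · have h1 : ∀ m : ({1} : Set ℕ), clf s (m : ℕ) = 0 := by
        rintro ⟨m, hm⟩
        simp only [Set.mem_singleton_iff] at hm
        subst hm
        simp [clf]
      have : (fun m : ({1} : Set ℕ) => clf s (m : ℕ)) = fun _ => 0 := funext h1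
      rw [this]
      simpa using hasSum_zero
  · intro hS
    have hp : p.Prime := hS p (mem_insert_self _ _)
    have hSP : ∀ q ∈ S, q.Prime := fun q hq => hS q (mem_insert_of_mem hq)
    obtain ⟨ihN, ihH⟩ := ih hSP
    have hcp : ‖cf s p‖ < 1 := norm_cf_prime_lt_one hs hp
    -- Euler product for `cf` over `factoredNumbers S`
    have hhom : ∀ {q : ℕ}, q.Prime → ‖(riemannZetaSummandHom
        (ne_zero_of_one_lt_re hs)).toMonoidHom q‖ < 1 := fun {q} hq =>
      norm_cf_prime_lt_one hs hq
    obtain ⟨hSmN, hSmH⟩ :=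
      EulerProduct.summable_and_hasSum_factoredNumbers_prod_filter_prime_geometric
        (f := (riemannZetaSummandHom (ne_zero_of_one_lt_re hs)).toMonoidHom) hhom S
    have hfilter : S.filter Nat.Prime = S := Finset.filter_true_of_mem hSP
    rw [hfilter] at hSmH
    -- identify with cf
    have hSmN' : Summable (fun m : Nat.factoredNumbers S => ‖cf s (m : ℕ)‖) := hSmN
    have hSmH' : HasSum (fun m : Nat.factoredNumbers S => cf s (m : ℕ))
        (∏ q ∈ S, (1 - cf s q)⁻¹) := hSmH
    -- geometric sums
    have hgeoN : Summable fun k : ℕ => ‖cf s p ^ k‖ := by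
      simpa using summable_norm_geometric_of_norm_lt_one hcp
    have hgeo : HasSum (fun k : ℕ => cf s p ^ k) (1 - cf s p)⁻¹ :=
      hasSum_geometric_of_norm_lt_one hcp
    have hkg : HasSum (fun k : ℕ => (k : ℂ) * cf s p ^ k) (cf s p / (1 - cf s p) ^ 2) :=
      hasSum_coe_mul_geometric_of_norm_lt_one hcp
    have hkgN : Summable fun k : ℕ => ‖(k : ℂ) * cf s p ^ k‖ := by
      have := summable_norm_mul_geometric_of_norm_lt_one (k := 1) (r := cf s p) (u := id) hcp
        (by simpa using isBigO_refl (fun n : ℕ => (n : ℝ)) Filter.atTop)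
      simpa using this
    have hkgN' : Summable fun k : ℕ => ‖(Real.log p : ℂ) * ((k : ℂ) * cf s p ^ k)‖ := by
      simpa [norm_mul] using hkgN.mul_left ‖(Real.log p : ℂ)‖
    -- the two product families
    have hA : HasSum (fun x : ℕ × Nat.factoredNumbers S =>
        ((Real.log p : ℂ) * ((x.1 : ℂ) * cf s p ^ x.1)) * cf s (x.2 : ℕ))
        (((Real.log p : ℂ) * (cf s p / (1 - cf s p) ^ 2)) * ∏ q ∈ S, (1 - cf s q)⁻¹) := by
      apply HasSum.mul (hkg.mul_left _) hSmH'
      apply summable_mul_of_summable_norm hkgN' hSmN'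
    have hB : HasSum (fun x : ℕ × Nat.factoredNumbers S =>
        cf s p ^ x.1 * clf s (x.2 : ℕ))
        ((1 - cf s p)⁻¹ * ((∑ q ∈ S, (Real.log q : ℂ) / ((q : ℂ) ^ s - 1)) *
          ∏ q ∈ S, (1 - cf s q)⁻¹)) := by
      apply HasSum.mul hgeo ihH
      apply summable_mul_of_summable_norm hgeoN ihN
    have hAB := hA.add hB
    -- pointwise identification
    have key : ∀ x : ℕ × Nat.factoredNumbers S,
        clf s ((Nat.equivProdNatFactoredNumbers hp hpS x : ℕ)) =
        ((Real.log p : ℂ) * ((x.1 : ℂ) * cf s p ^ x.1)) * cf s (x.2 : ℕ) +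
          cf s p ^ x.1 * clf s (x.2 : ℕ) := by
      rintro ⟨k, m, hm⟩
      have hm0 : m ≠ 0 := Nat.ne_zero_of_mem_factoredNumbers hm
      rw [Nat.equivProdNatFactoredNumbers_apply' hp hpS]
      simp only [clf]
      have hcast : ((p ^ k * m : ℕ) : ℝ) = (p : ℝ) ^ k * (m : ℝ) := by push_cast; ring
      rw [hcast, Real.log_mul (by exact_mod_cast pow_ne_zero k hp.pos.ne') (by exact_mod_cast hm0), Real.log_pow]
      have hc2 : ((p ^ k * m : ℕ) : ℂ) ^ (-s) = cf s p ^ k * cf s m := by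
        have h3 := cf_mul hs (p ^ k) m
        rw [cf_pow hs] at h3
        exact h3
      rw [hc2]
      push_cast
      rw [show ((m : ℕ) : ℂ) ^ (-s) = cf s m from rfl]
      ring
    -- norm summability over the product
    have hNsum : Summable (fun x : ℕ × Nat.factoredNumbers S =>
        ‖clf s ((Nat.equivProdNatFactoredNumbers hp hpS x : ℕ))‖) := by
      have h1 : Summable (fun x : ℕ × Nat.factoredNumbers S =>
          ‖(Real.log p : ℂ) * ((x.1 : ℂ) * cf s p ^ x.1)‖ * ‖cf s (x.2 : ℕ)‖) :=
        hkgN'.mul_of_nonneg hSmN' (fun _ => norm_nonneg _) (fun _ => norm_nonneg _)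
      have h2 : Summable (fun x : ℕ × Nat.factoredNumbers S =>
          ‖cf s p ^ x.1‖ * ‖clf s (x.2 : ℕ)‖) :=
        hgeoN.mul_of_nonneg ihN (fun _ => norm_nonneg _) (fun _ => norm_nonneg _)
      refine Summable.of_nonneg_of_le (fun _ => norm_nonneg _) (fun x => ?_) (h1.add h2)
      rw [key x]
      refine le_trans (norm_add_le _ _) (add_le_add ?_ ?_)
      · exact norm_mul_le _ _
      · exact norm_mul_le _ _
    constructor
    · rw [← Equiv.summable_iff (Nat.equivProdNatFactoredNumbers hp hpS)]
      exact hNsum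
    · rw [← Equiv.hasSum_iff (Nat.equivProdNatFactoredNumbers hp hpS)]
      have : (fun m : Nat.factoredNumbers (insert p S) => clf s (m : ℕ)) ∘
          (Nat.equivProdNatFactoredNumbers hp hpS) = fun x => 
          ((Real.log p : ℂ) * ((x.1 : ℂ) * cf s p ^ x.1)) * cf s (x.2 : ℕ) +
            cf s p ^ x.1 * clf s (x.2 : ℕ) := funext key
      rw [this]
      convert hAB using 1
      rw [Finset.sum_insert hpS, Finset.prod_insert hpS]
      rw [cf_prime_div_eq hs hp]
      ring

end Weighted
section Main

set_option maxHeartbeats 1000000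

open Complex Finset

variable {θ : ℕ → ℝ} {s : ℂ}

lemma primesLe_primes {x : ℝ} : ∀ p ∈ primesLe x, p.Prime := fun _ hp => (mem_primesLe.mp hp).1

lemma summable_cf (hs : 1 < s.re) : Summable (cf s) := (summable_norm_cf hs).of_norm

lemma summable_clf (hs : 1 < s.re) : Summable (clf s) := (summable_norm_clf hs).of_norm

/-- Euler product over an arbitrary finset of primes, in `cf` notation. -/
lemma euler_factored (hs : 1 < s.re) (S : Finset ℕ) (hS : ∀ p ∈ S, p.Prime) :
    Summable (fun m : Nat.factoredNumbers S => ‖cf s (m : ℕ)‖) ∧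
      HasSum (fun m : Nat.factoredNumbers S => cf s (m : ℕ))
        (∏ p ∈ S, (1 - cf s p)⁻¹) := by
  have hhom : ∀ {q : ℕ}, q.Prime → ‖(riemannZetaSummandHom
      (ne_zero_of_one_lt_re hs)).toMonoidHom q‖ < 1 := fun {q} hq =>
    norm_cf_prime_lt_one hs hq
  obtain ⟨h1, h2⟩ :=
    EulerProduct.summable_and_hasSum_factoredNumbers_prod_filter_prime_geometric
      (f := (riemannZetaSummandHom (ne_zero_of_one_lt_re hs)).toMonoidHom) hhom S
  rw [Finset.filter_true_of_mem hS] at h2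
  exact ⟨h1, h2⟩

/-- The two "rough sum" identities. -/
lemma rough_sums (hs : 1 < s.re) (S : Finset ℕ) (hS : ∀ p ∈ S, p.Prime) :
    (∑' N : ℕ, cf s N) =
      (∏ p ∈ S, (1 - cf s p)⁻¹) * ∑' M : rough S, cf s (M : ℕ) ∧
    (∑' N : ℕ, clf s N) =
      ((∑ p ∈ S, (Real.log p : ℂ) / ((p : ℂ) ^ s - 1)) * ∏ p ∈ S, (1 - cf s p)⁻¹) *
          (∑' M : rough S, cf s (M : ℕ)) +
        (∏ p ∈ S, (1 - cf s p)⁻¹) * ∑' M : rough S, clf s (M : ℕ) := by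
  obtain ⟨hFN, hFH⟩ := euler_factored hs S hS
  obtain ⟨hWN, hWH⟩ := weighted_factored hs S hS
  have hRaN : Summable (fun M : rough S => ‖cf s (M : ℕ)‖) :=
    (summable_norm_cf hs).subtype _
  have hRlN : Summable (fun M : rough S => ‖clf s (M : ℕ)‖) :=
    (summable_norm_clf hs).subtype _
  have hRa : HasSum (fun M : rough S => cf s (M : ℕ)) (∑' M : rough S, cf s (M : ℕ)) :=
    ((summable_cf hs).subtype _).hasSum
  have hRl : HasSum (fun M : rough S => clf s (M : ℕ)) (∑' M : rough S, clf s (M : ℕ)) :=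
    ((summable_clf hs).subtype _).hasSum
  -- the bijection
  set e := Equiv.ofBijective _ (mulMap_bijective S) with he
  -- full sums restricted to positives
  have hsupc : Function.support (cf s) ⊆ {N : ℕ | N ≠ 0} := by
    intro N hN
    simp only [Function.mem_support] at hN
    intro h0
    exact hN (by rw [h0]; exact cf_zero hs)
  have hsupl : Function.support (clf s) ⊆ {N : ℕ | N ≠ 0} := by
    intro N hN
    simp only [Function.mem_support] at hN
    intro h0
    subst h0
    apply hN
    simp [clf]
  have hZsub : HasSum (fun N : {N : ℕ | N ≠ 0} => cf s (N : ℕ)) (∑' N : ℕ, cf s N) :=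
    (hasSum_subtype_iff_of_support_subset hsupc).mpr (summable_cf hs).hasSum
  have hLsub : HasSum (fun N : {N : ℕ | N ≠ 0} => clf s (N : ℕ)) (∑' N : ℕ, clf s N) :=
    (hasSum_subtype_iff_of_support_subset hsupl).mpr (summable_clf hs).hasSum
  constructor
  · -- cf identity
    have hprod : HasSum (fun x : Nat.factoredNumbers S × rough S =>
        cf s (x.1 : ℕ) * cf s (x.2 : ℕ))
        ((∏ p ∈ S, (1 - cf s p)⁻¹) * ∑' M : rough S, cf s (M : ℕ)) := by
      apply HasSum.mul hFH hRa
      apply summable_mul_of_summable_norm hFN hRaN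
    have htrans : HasSum (fun x : Nat.factoredNumbers S × rough S =>
        cf s ((e x : {N : ℕ // N ≠ 0}) : ℕ)) (∑' N : ℕ, cf s N) := by
      exact (Equiv.hasSum_iff e).mpr hZsub
    have hfun : (fun x : Nat.factoredNumbers S × rough S =>
        cf s ((e x : {N : ℕ // N ≠ 0}) : ℕ)) = fun x => cf s (x.1 : ℕ) * cf s (x.2 : ℕ) := by
      funext x
      have : ((e x : {N : ℕ // N ≠ 0}) : ℕ) = (x.1 : ℕ) * (x.2 : ℕ) := rfl
      rw [this, cf_mul hs]
    rw [hfun] at htrans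
    exact htrans.unique hprod
  · -- clf identity
    have hprod1 : HasSum (fun x : Nat.factoredNumbers S × rough S =>
        clf s (x.1 : ℕ) * cf s (x.2 : ℕ))
        (((∑ p ∈ S, (Real.log p : ℂ) / ((p : ℂ) ^ s - 1)) * ∏ p ∈ S, (1 - cf s p)⁻¹) *
          ∑' M : rough S, cf s (M : ℕ)) := by
      apply HasSum.mul hWH hRa
      apply summable_mul_of_summable_norm hWN hRaN
    have hprod2 : HasSum (fun x : Nat.factoredNumbers S × rough S =>
        cf s (x.1 : ℕ) * clf s (x.2 : ℕ))
        ((∏ p ∈ S, (1 - cf s p)⁻¹) * ∑' M : rough S, clf s (M : ℕ)) := by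
      apply HasSum.mul hFH hRl
      apply summable_mul_of_summable_norm hFN hRlN
    have hadd := hprod1.add hprod2
    have htrans : HasSum (fun x : Nat.factoredNumbers S × rough S =>
        clf s ((e x : {N : ℕ // N ≠ 0}) : ℕ)) (∑' N : ℕ, clf s N) :=
      (Equiv.hasSum_iff e).mpr hLsub
    have hfun : (fun x : Nat.factoredNumbers S × rough S =>
        clf s ((e x : {N : ℕ // N ≠ 0}) : ℕ)) =
        fun x => clf s (x.1 : ℕ) * cf s (x.2 : ℕ) + cf s (x.1 : ℕ) * clf s (x.2 : ℕ) := by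
      funext x
      have hx : ((e x : {N : ℕ // N ≠ 0}) : ℕ) = (x.1 : ℕ) * (x.2 : ℕ) := rfl
      rw [hx]
      have h1 : (x.1 : ℕ) ≠ 0 := Nat.ne_zero_of_mem_factoredNumbers x.1.2
      have h2 : (x.2 : ℕ) ≠ 0 := x.2.2.1
      have hcast : (((x.1 : ℕ) * (x.2 : ℕ) : ℕ) : ℝ) = ((x.1 : ℕ) : ℝ) * ((x.2 : ℕ) : ℝ) := by
        push_cast; ring
      simp only [clf]
      rw [hcast, Real.log_mul (by exact_mod_cast h1) (by exact_mod_cast h2),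
        show ((((x.1 : ℕ) * (x.2 : ℕ) : ℕ)) : ℂ) ^ (-s) = cf s ((x.1 : ℕ) * (x.2 : ℕ)) from rfl,
        cf_mul hs]
      push_cast
      rw [show (((x.1 : ℕ) : ℂ)) ^ (-s) = cf s (x.1 : ℕ) from rfl,
        show (((x.2 : ℕ) : ℂ)) ^ (-s) = cf s (x.2 : ℕ) from rfl]
      ring
    rw [hfun] at htrans
    exact htrans.unique hadd

end Main
section Fiber

set_option maxHeartbeats 1000000

open Complex Finset

variable {θ : ℕ → ℝ} {s : ℂ}

/-- rough sum without log weight -/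
noncomputable def Ra (θ : ℕ → ℝ) (s : ℂ) (n : ℕ) : ℂ :=
  ∑' M : rough (primesLe (θ n)), cf s (M : ℕ)

/-- rough sum with log weight -/
noncomputable def Rl (θ : ℕ → ℝ) (s : ℂ) (n : ℕ) : ℂ :=
  ∑' M : rough (primesLe (θ n)), clf s (M : ℕ)

lemma Eset_sums (hθ : ∀ n : ℕ, 1 ≤ n → (n : ℝ) ≤ θ n) (hs : 1 < s.re) {n : ℕ}
    (hn : InB θ n) :
    HasSum (fun N : Eset θ n => cf s (N : ℕ)) (cf s n * Ra θ s n) ∧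
      HasSum (fun N : Eset θ n => clf s (N : ℕ))
        (clf s n * Ra θ s n + cf s n * Rl θ s n) := by
  set K := primesLe (θ n) with hK
  set e := Equiv.ofBijective _ (mulN_bijective hθ hn) with he
  have hRa : HasSum (fun M : rough K => cf s (M : ℕ)) (Ra θ s n) :=
    ((summable_cf hs).subtype _).hasSum
  have hRl : HasSum (fun M : rough K => clf s (M : ℕ)) (Rl θ s n) :=
    ((summable_clf hs).subtype _).hasSum
  have hn0 : n ≠ 0 := hn.1.ne'
  constructor
  · refine (Equiv.hasSum_iff e).mp ?_
    have hfun : ((fun N : Eset θ n => cf s (N : ℕ)) ∘ e) =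
        fun M : rough K => cf s n * cf s (M : ℕ) := by
      funext M
      have hx : ((e M : Eset θ n) : ℕ) = n * (M : ℕ) := rfl
      simp only [Function.comp_apply]
      rw [hx, cf_mul hs]
    rw [hfun]
    exact hRa.mul_left _
  · refine (Equiv.hasSum_iff e).mp ?_
    have hfun : ((fun N : Eset θ n => clf s (N : ℕ)) ∘ e) =
        fun M : rough K => clf s n * cf s (M : ℕ) + cf s n * clf s (M : ℕ) := by
      funext M
      have hx : ((e M : Eset θ n) : ℕ) = n * (M : ℕ) := rfl
      have hM0 : (M : ℕ) ≠ 0 := M.2.1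
      simp only [Function.comp_apply]
      rw [hx]
      simp only [clf]
      have hcast : ((n * (M : ℕ) : ℕ) : ℝ) = (n : ℝ) * ((M : ℕ) : ℝ) := by push_cast; ring
      rw [hcast, Real.log_mul (by exact_mod_cast hn0) (by exact_mod_cast hM0),
        show (((n * (M : ℕ) : ℕ)) : ℂ) ^ (-s) = cf s (n * (M : ℕ)) from rfl, cf_mul hs]
      push_cast
      rw [show ((n : ℕ) : ℂ) ^ (-s) = cf s n from rfl,
        show (((M : ℕ) : ℂ)) ^ (-s) = cf s (M : ℕ) from rfl]
      ring
    rw [hfun]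
    exact (hRa.mul_left _).add (hRl.mul_left _)

/-- totalized greedy map -/
noncomputable def phiTot (hθ : ∀ n : ℕ, 1 ≤ n → (n : ℝ) ≤ θ n) : ℕ → ℕ :=
  fun N => if hN : N ≠ 0 then phi hθ hN else 0

lemma preimage_phiTot (hθ : ∀ n : ℕ, 1 ≤ n → (n : ℝ) ≤ θ n) {n : ℕ} (hn : InB θ n) :
    phiTot hθ ⁻¹' {n} = Eset θ n := by
  ext N
  simp only [Set.mem_preimage, Set.mem_singleton_iff, phiTot]
  constructor
  · intro h
    rcases eq_or_ne N 0 with rfl | hN0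
    · rw [dif_neg (by simp)] at h
      exact absurd h.symm hn.1.ne'
    · rw [dif_pos hN0] at h
      obtain ⟨-, hmatch⟩ := (phi_eq_iff hθ hN0).mp h
      exact ⟨hN0, hmatch⟩
  · rintro ⟨hN0, hmatch⟩
    rw [dif_pos hN0]
    exact (phi_eq_iff hθ hN0).mpr ⟨hn, hmatch⟩

lemma tsum_fiber_eq_zero (hθ : ∀ n : ℕ, 1 ≤ n → (n : ℝ) ≤ θ n) (hs : 1 < s.re)
    {g : ℕ → ℂ} (hg : g 0 = 0) {n : ℕ} (hn : ¬ InB θ n) :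
    ∑' N : (phiTot hθ ⁻¹' {n} : Set ℕ), g (N : ℕ) = 0 := by
  have : ∀ N : (phiTot hθ ⁻¹' {n} : Set ℕ), g (N : ℕ) = 0 := by
    rintro ⟨N, hN⟩
    simp only [Set.mem_preimage, Set.mem_singleton_iff, phiTot] at hN
    rcases eq_or_ne N 0 with rfl | hN0
    · exact hg
    · rw [dif_pos hN0] at hN
      exact absurd (hN ▸ phi_mem_B hθ hN0) hn
  rw [funext this]
  exact tsum_zero

lemma global_c (hθ : ∀ n : ℕ, 1 ≤ n → (n : ℝ) ≤ θ n) (hs : 1 < s.re) :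
    HasSum (fun n => if InB θ n then cf s n * Ra θ s n else 0) (∑' N : ℕ, cf s N) := by
  have hfib := ((summable_cf hs).hasSum).tsum_fiberwise (phiTot hθ)
  have hfun : (fun n => ∑' N : (phiTot hθ ⁻¹' {n} : Set ℕ), cf s (N : ℕ)) =
      fun n => if InB θ n then cf s n * Ra θ s n else 0 := by
    funext n
    by_cases hn : InB θ n
    · rw [if_pos hn, preimage_phiTot hθ hn]
      exact (Eset_sums hθ hs hn).1.tsum_eq
    · rw [if_neg hn]
      exact tsum_fiber_eq_zero hθ hs (cf_zero hs) hn
  rw [← hfun]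
  exact hfib

lemma global_l (hθ : ∀ n : ℕ, 1 ≤ n → (n : ℝ) ≤ θ n) (hs : 1 < s.re) :
    HasSum (fun n => if InB θ n then clf s n * Ra θ s n + cf s n * Rl θ s n else 0)
      (∑' N : ℕ, clf s N) := by
  have hfib := ((summable_clf hs).hasSum).tsum_fiberwise (phiTot hθ)
  have hfun : (fun n => ∑' N : (phiTot hθ ⁻¹' {n} : Set ℕ), clf s (N : ℕ)) =
      fun n => if InB θ n then clf s n * Ra θ s n + cf s n * Rl θ s n else 0 := by
    funext n
    by_cases hn : InB θ n
    · rw [if_pos hn, preimage_phiTot hθ hn]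
      exact (Eset_sums hθ hs hn).2.tsum_eq
    · rw [if_neg hn]
      exact tsum_fiber_eq_zero hθ hs (by simp [clf]) hn
  rw [← hfun]
  exact hfib

end Fiber
end DIB
set_option maxHeartbeats 1600000 in
/-- For `Re(s) > 1`,
`0 = ∑_{n ∈ B_θ} n^{-s} (∑_{p ≤ θ(n)} log p/(p^s - 1) - log n) ∏_{p ≤ θ(n)} (1 - p^{-s})`. -/
theorem dirichlet_identity_B_deriv (θ : ℕ → ℝ) (hθ1 : 2 ≤ θ 1)
    (hθ : ∀ n : ℕ, 1 ≤ n → (n : ℝ) ≤ θ n) (s : ℂ) (hs : 1 < s.re) :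
    (0 : ℂ) = ∑' n : ℕ,
      if InB θ n then
        (n : ℂ) ^ (-s) *
          ((∑ p ∈ primesLe (θ n), (Real.log p : ℂ) / ((p : ℂ) ^ s - 1)) - (Real.log n : ℂ)) *
          ∏ p ∈ primesLe (θ n), (1 - (p : ℂ) ^ (-s))
      else 0 := by
  classical
  set Zv := ∑' N : ℕ, DIB.cf s N with hZvdef
  set Lv := ∑' N : ℕ, DIB.clf s N with hLvdef
  have hZ0 : Zv ≠ 0 := by
    rw [hZvdef, DIB.cf_eq_hom hs, tsum_riemannZetaSummand hs]
    exact riemannZeta_ne_zero_of_one_lt_re hs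
  set Pn : ℕ → ℂ := fun n => ∏ p ∈ primesLe (θ n), (1 - DIB.cf s p) with hPndef
  set Sg : ℕ → ℂ := fun n => ∑ p ∈ primesLe (θ n), (Real.log p : ℂ) / ((p : ℂ) ^ s - 1)
    with hSgdef
  have hPnSP : ∀ n : ℕ, Pn n * (∏ p ∈ primesLe (θ n), (1 - DIB.cf s p)⁻¹) = 1 := by
    intro n
    rw [hPndef]
    simp only
    rw [← Finset.prod_mul_distrib]
    exact Finset.prod_eq_one fun p hp =>
      mul_inv_cancel₀ (DIB.one_sub_cf_ne_zero hs (DIB.primesLe_primes p hp))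
  have hRa : ∀ n : ℕ, DIB.Ra θ s n = Pn n * Zv := by
    intro n
    have h := (DIB.rough_sums hs (primesLe (θ n)) DIB.primesLe_primes).1
    rw [show (∑' M : DIB.rough (primesLe (θ n)), DIB.cf s (M : ℕ)) = DIB.Ra θ s n from rfl] at h
    calc DIB.Ra θ s n
        = (Pn n * ∏ p ∈ primesLe (θ n), (1 - DIB.cf s p)⁻¹) * DIB.Ra θ s n := by
          rw [hPnSP n, one_mul]
      _ = Pn n * ((∏ p ∈ primesLe (θ n), (1 - DIB.cf s p)⁻¹) * DIB.Ra θ s n) := by ring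
      _ = Pn n * Zv := by rw [← h]
  have hRl : ∀ n : ℕ, DIB.Rl θ s n = Pn n * Lv - Sg n * DIB.Ra θ s n := by
    intro n
    have h := (DIB.rough_sums hs (primesLe (θ n)) DIB.primesLe_primes).2
    rw [show (∑' M : DIB.rough (primesLe (θ n)), DIB.cf s (M : ℕ)) = DIB.Ra θ s n from rfl,
      show (∑' M : DIB.rough (primesLe (θ n)), DIB.clf s (M : ℕ)) = DIB.Rl θ s n from rfl] at h
    have e1 := hPnSP n
    linear_combination (-(Pn n)) * h - (Sg n * DIB.Ra θ s n + DIB.Rl θ s n) * e1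
  -- the three indicator families
  set u : ℕ → ℂ := fun n => if InB θ n then DIB.cf s n * Pn n else 0 with hudef
  set v : ℕ → ℂ := fun n => if InB θ n then DIB.clf s n * Pn n else 0 with hvdef
  set w : ℕ → ℂ := fun n => if InB θ n then DIB.cf s n * Sg n * Pn n else 0 with hwdef
  have hU : HasSum u 1 := by
    refine (hasSum_mul_right_iff hZ0).mp ?_
    rw [one_mul]
    have hGc := DIB.global_c hθ hs
    have hfun : (fun n => if InB θ n then DIB.cf s n * DIB.Ra θ s n else 0) =
        fun n => u n * Zv := by
      funext n
      rw [hudef]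
      simp only
      split_ifs with h
      · rw [hRa n]; ring
      · rw [zero_mul]
    rw [hfun] at hGc
    exact hGc
  have hV : HasSum (fun n => v n * Zv + (u n * Lv - w n * Zv)) Lv := by
    have hGl := DIB.global_l hθ hs
    have hfun : (fun n => if InB θ n then
        DIB.clf s n * DIB.Ra θ s n + DIB.cf s n * DIB.Rl θ s n else 0) =
        fun n => v n * Zv + (u n * Lv - w n * Zv) := by
      funext n
      rw [hudef, hvdef, hwdef]
      simp only
      split_ifs with h
      · rw [hRl n, hRa n]; ring
      · simp
    rw [hfun] at hGl
    exact hGl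
  have huL : HasSum (fun n => u n * Lv) (1 * Lv) := hU.mul_right Lv
  have hsub := hV.sub huL
  have hsub' : HasSum (fun n => (v n - w n) * Zv) (0 * Zv) := by
    have hfun : (fun n => (v n * Zv + (u n * Lv - w n * Zv)) - u n * Lv) =
        fun n => (v n - w n) * Zv := by
      funext n; ring
    have hval : Lv - 1 * Lv = 0 * Zv := by ring
    rw [hfun, hval] at hsub
    exact hsub
  have hfin : HasSum (fun n => v n - w n) 0 := (hasSum_mul_right_iff hZ0).mp hsub'
  have hneg : HasSum (fun n => w n - v n) 0 := by
    have h := hfin.neg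
    rw [neg_zero] at h
    have hfun : (fun n => -(v n - w n)) = fun n => w n - v n := funext fun n => by ring
    rw [hfun] at h
    exact h
  have hGoal : (fun n : ℕ =>
      if InB θ n then
        (n : ℂ) ^ (-s) *
          ((∑ p ∈ primesLe (θ n), (Real.log p : ℂ) / ((p : ℂ) ^ s - 1)) - (Real.log n : ℂ)) *
          ∏ p ∈ primesLe (θ n), (1 - (p : ℂ) ^ (-s))
      else 0) = fun n => w n - v n := by
    funext n
    rw [hwdef, hvdef]
    simp only
    split_ifs with h
    · simp only [hSgdef, hPndef, DIB.cf, DIB.clf]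
      ring
    · simp
  rw [hGoal]
  exact (hneg.tsum_eq).symm
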